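/- Let C ⊆ L⁰₊ be convex. If C admits a numéraire (i.e., C^num ≠ ∅), then C is bounded in probability. -/

import Mathlib

open MeasureTheory Filter Set

noncomputable section

variable {Ω : Type*} [MeasurableSpace Ω]

/-- The nonnegative orthant `L⁰₊` of `L⁰`: (a.e. classes of) random variables that are
a.e. nonnegative.  We work with representatives, requiring a.e.-measurability. -/
def L0plus (P : Measure Ω) : Set (Ω → ℝ) :=
  {f | AEMeasurable f P ∧ 0 ≤ᵐ[P] f}

/-- A set `A ⊆ L⁰₊` is bounded (in probability) if `lim_{ℓ→∞} sup_{f∈A} P[f>ℓ] = 0`. -/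
def BoundedInProb (P : Measure Ω) (A : Set (Ω → ℝ)) : Prop :=
  Tendsto (fun ℓ : ℝ => ⨆ f ∈ A, P {ω | ℓ < f ω}) atTop (nhds 0)

/-- A set `K` is closed in probability: it contains every (a.e.-measurable) limit in
measure of sequences from `K`.  (Convergence in probability is metrizable, so sequential
closedness is closedness.) -/
def ClosedInProb (P : Measure Ω) (K : Set (Ω → ℝ)) : Prop :=
  ∀ (f : ℕ → Ω → ℝ) (g : Ω → ℝ), (∀ n, f n ∈ K) → AEMeasurable g P →
    TendstoInMeasure P f atTop g → g ∈ K

/-- `g` is strictly positive on `C`: `P[f > 0, g = 0] = 0` for every `f ∈ C`. -/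
def StrictlyPositiveOn (P : Measure Ω) (C : Set (Ω → ℝ)) (g : Ω → ℝ) : Prop :=
  ∀ f ∈ C, P ({ω | 0 < f ω} ∩ {ω | g ω = 0}) = 0

/-- `Q` is a probability measure equivalent to `P`. -/
def EquivProb (P Q : Measure Ω) : Prop :=
  IsProbabilityMeasure Q ∧ Q ≪ P ∧ P ≪ Q

/-- `g` is a numéraire of `C`: it is strictly positive on `C` and there is an equivalent
probability `Q` with `E_Q[(f/g)·1_{g>0}] ≤ Q[g>0]` for all `f ∈ C`. -/
def IsNumeraire (P : Measure Ω) (C : Set (Ω → ℝ)) (g : Ω → ℝ) : Prop :=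
  StrictlyPositiveOn P C g ∧
    ∃ Q : Measure Ω, EquivProb P Q ∧
      ∀ f ∈ C, (∫⁻ ω in {ω | 0 < g ω}, ENNReal.ofReal (f ω / g ω) ∂Q) ≤ Q {ω | 0 < g ω}

/-- The class `CS_g(C)` of subsets `K` of `L⁰₊` with (CS1) `C ⊆ K`, (CS2) `K` convex and
closed in probability, (CS3) `f ∈ K`, `δ ≥ 0`, `(1+δ)f − δg ∈ L⁰₊` imply `(1+δ)f − δg ∈ K`. -/
def CSclass (P : Measure Ω) (C : Set (Ω → ℝ)) (g : Ω → ℝ) : Set (Set (Ω → ℝ)) :=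
  {K | K ⊆ L0plus P ∧ C ⊆ K ∧ Convex ℝ K ∧ ClosedInProb P K ∧
    ∀ f ∈ K, ∀ δ : ℝ, 0 ≤ δ →
      (fun ω => (1 + δ) * f ω - δ * g ω) ∈ L0plus P →
      (fun ω => (1 + δ) * f ω - δ * g ω) ∈ K}

/-- `cs_g(C)`, the smallest element of `CS_g(C)`. -/
def csSet (P : Measure Ω) (C : Set (Ω → ℝ)) (g : Ω → ℝ) : Set (Ω → ℝ) :=
  ⋂ K ∈ CSclass P C g, K

/-- The solid hull of `K` in `L⁰₊`. -/
def SolidHull (P : Measure Ω) (K : Set (Ω → ℝ)) : Set (Ω → ℝ) :=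
  {f | f ∈ L0plus P ∧ ∃ h ∈ K, f ≤ᵐ[P] h}

/-- `L∞`: essentially bounded (a.e.-measurable) random variables. -/
def Linf (P : Measure Ω) : Set (Ω → ℝ) :=
  {f | AEMeasurable f P ∧ ∃ c : ℝ, ∀ᵐ ω ∂P, |f ω| ≤ c}

/-- `L∞₊ = L⁰₊ ∩ L∞`. -/
def LinfPlus (P : Measure Ω) : Set (Ω → ℝ) := L0plus P ∩ Linf P

/-- `L` is solid: `0 ≤ u ≤ h` a.s. with `h ∈ L` implies `u ∈ L`. -/
def IsSolid (P : Measure Ω) (L : Set (Ω → ℝ)) : Prop :=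
  ∀ u : Ω → ℝ, AEMeasurable u P → 0 ≤ᵐ[P] u → (∃ h ∈ L, u ≤ᵐ[P] h) → u ∈ L

/-- `A_α := α (L − 1) = { α(f − 1) : f ∈ L }`. -/
def Aset (L : Set (Ω → ℝ)) (α : ℝ) : Set (Ω → ℝ) :=
  (fun f : Ω → ℝ => fun ω => α * (f ω - 1)) '' L

/-- `J := ⋃_{α ≥ 0} A_α`. -/
def Jset (L : Set (Ω → ℝ)) : Set (Ω → ℝ) := ⋃ α ∈ Ici (0 : ℝ), Aset L α

/-- The weak* topology on (representatives of) `L∞`, viewed as the dual of `L¹(P)`: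
the topology induced by the maps `φ ↦ ∫ φ·u dP` for integrable `u`. -/
def weakStarTop (P : Measure Ω) : TopologicalSpace (Ω → ℝ) :=
  ⨅ (u : Ω → ℝ) (_ : Integrable u P),
    TopologicalSpace.induced (fun φ : Ω → ℝ => ∫ ω, φ ω * u ω ∂P) inferInstance

/-- The witness set `K := { h ∈ L⁰₊ : P[h>0, g=0]=0 and E_Q[(h/g)·1_{g>0}] ≤ Q[g>0] }`. -/
def Kwitness (P Q : Measure Ω) (g : Ω → ℝ) : Set (Ω → ℝ) :=
  {h | h ∈ L0plus P ∧ P ({ω | 0 < h ω} ∩ {ω | g ω = 0}) = 0 ∧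
    (∫⁻ ω in {ω | 0 < g ω}, ENNReal.ofReal (h ω / g ω) ∂Q) ≤ Q {ω | 0 < g ω}}

/-- The set `C` of the example: outcomes `1 − θ₁ + (θ₁ + θ₂)ξ` for `θ` in the constraint
set `Θ = { θ ∈ ℝ₊² : θ₂ ≤ √θ₁ ≤ 1 }`. -/
def exampleC (ξ : Ω → ℝ) : Set (Ω → ℝ) :=
  {f | ∃ θ : ℝ × ℝ, (0 ≤ θ.1 ∧ 0 ≤ θ.2 ∧ θ.2 ≤ Real.sqrt θ.1 ∧ Real.sqrt θ.1 ≤ 1) ∧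
    f = fun ω => 1 - θ.1 + (θ.1 + θ.2) * ξ ω}

/-- if a convex `C ⊆ L⁰₊` admits a numéraire, then `C` is bounded in
probability. -/
theorem bounded_of_numeraire_exists
    (P : Measure Ω) [IsProbabilityMeasure P]
    (C : Set (Ω → ℝ)) (hC : C ⊆ L0plus P) (hconv : Convex ℝ C)
    (hex : ∃ g ∈ C, IsNumeraire P C g) :
    BoundedInProb P C := by
  obtain ⟨g, hgC, hpos, Q, ⟨hQprob, hQP, hPQ⟩, hbound⟩ := hex
  haveI := hQprob
  rw [BoundedInProb, ENNReal.tendsto_nhds_zero]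
  intro ε hε
  -- reduce to ε ≤ 1
  suffices h : ∀ᶠ ℓ in atTop, (⨆ f ∈ C, P {ω | ℓ < f ω}) ≤ min ε 1 by
    exact h.mono fun ℓ hℓ => hℓ.trans (min_le_left _ _)
  set ε' : ENNReal := min ε 1 with hε'def
  have hε'0 : ε' ≠ 0 := by
    exact (lt_min hε zero_lt_one).ne'
  -- measurable representative of g
  have hgL : g ∈ L0plus P := hC hgC
  obtain ⟨hgm, hgpos⟩ := hgL
  set g' : Ω → ℝ := hgm.mk g with hg'def
  have hg'meas : Measurable g' := hgm.measurable_mk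
  have hgg' : g =ᵐ[P] g' := hgm.ae_eq_mk
  have hgg'Q : g =ᵐ[Q] g' := hQP.ae_le hgg'
  -- uniform absolute continuity of P w.r.t. Q
  have hZint : ∫⁻ ω, P.rnDeriv Q ω ∂Q ≠ ⊤ := (Measure.lintegral_rnDeriv_lt_top P Q).ne
  obtain ⟨δ, hδ0, hδ⟩ := exists_pos_setLIntegral_lt_of_measure_lt hZint
    (ε := ε' / 2) (by simp [hε'0])
  have hPQs : ∀ s : Set Ω, Q s < δ → P s ≤ ε' / 2 := by
    intro s hsδ
    rw [← Measure.setLIntegral_rnDeriv hPQ s]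
    exact (hδ s hsδ).le
  -- choose real δ' with 0 < δ' and ofReal δ' < δ
  obtain ⟨c, hc0, hcδ⟩ := exists_between hδ0
  have hcfin : c ≠ ⊤ := fun h => hcδ.ne_top h
  set δ' : ℝ := c.toReal with hδ'def
  have hδ'0 : 0 < δ' := ENNReal.toReal_pos hc0.ne' hcfin
  have hδ'c : ENNReal.ofReal δ' = c := ENNReal.ofReal_toReal hcfin
  -- choose M with P {M < g'} ≤ ε'/2
  have htail : Tendsto (fun n : ℕ => P {ω | (n : ℝ) < g' ω}) atTop
      (nhds (P (⋂ n : ℕ, {ω | (n : ℝ) < g' ω}))) := by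
    refine tendsto_measure_iInter_atTop
      (fun n => (measurableSet_lt measurable_const hg'meas).nullMeasurableSet)
      ?_ ⟨0, measure_ne_top _ _⟩
    intro m n hmn ω hω
    simp only [Set.mem_setOf_eq] at hω ⊢
    exact lt_of_le_of_lt (show (m : ℝ) ≤ (n : ℝ) from Nat.cast_le.mpr hmn) hω
  have hInter : (⋂ n : ℕ, {ω | (n : ℝ) < g' ω}) = ∅ := by
    ext ω
    simp only [Set.mem_iInter, Set.mem_setOf_eq, Set.mem_empty_iff_false, iff_false, not_forall,
      not_lt]
    obtain ⟨n, hn⟩ := exists_nat_ge (g' ω)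
    exact ⟨n, hn⟩
  rw [hInter, measure_empty] at htail
  have hε'2 : (0 : ENNReal) < ε' / 2 :=
    ENNReal.div_pos hε'0 (by norm_num)
  obtain ⟨n₀, hn₀⟩ := (htail.eventually_le_const hε'2).exists
  set M : ℝ := (n₀ : ℝ) + 1 with hMdef
  have hM0 : 0 < M := by positivity
  have hTM : P {ω | M < g' ω} ≤ ε' / 2 := by
    refine le_trans (measure_mono fun ω hω => ?_) hn₀
    have h1 : (n₀ : ℝ) < M := by rw [hMdef]; linarith
    exact lt_trans h1 hω
  -- now the eventual bound
  filter_upwards [eventually_ge_atTop (max (M / δ') 1)] with ℓ hℓ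
  have hℓ1 : (1 : ℝ) ≤ ℓ := le_trans (le_max_right _ _) hℓ
  have hℓ0 : (0 : ℝ) < ℓ := lt_of_lt_of_le one_pos hℓ1
  have hMδℓ : M / ℓ ≤ δ' := by
    rw [div_le_iff₀ hℓ0]
    calc M = δ' * (M / δ') := by field_simp
    _ ≤ δ' * ℓ := by
        exact mul_le_mul_of_nonneg_left (le_trans (le_max_left _ _) hℓ) hδ'0.le
  refine iSup₂_le fun f hf => ?_
  obtain ⟨hfm, hfpos⟩ := hC hf
  set f' : Ω → ℝ := hfm.mk f with hf'def
  have hf'meas : Measurable f' := hfm.measurable_mk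
  have hff' : f =ᵐ[P] f' := hfm.ae_eq_mk
  have hff'Q : f =ᵐ[Q] f' := hQP.ae_le hff'
  -- replace f by f'
  have hPset : P {ω | ℓ < f ω} = P {ω | ℓ < f' ω} := by
    refine measure_congr (hff'.mono fun ω h => ?_)
    change (ℓ < f ω) = (ℓ < f' ω)
    rw [h]
  rw [hPset]
  -- decomposition
  set A : Set Ω := {ω | ℓ < f' ω} ∩ {ω | 0 < g' ω} ∩ {ω | g' ω ≤ M} with hAdef
  have hAmeas : MeasurableSet A :=
    ((hf'meas measurableSet_Ioi).inter (hg'meas measurableSet_Ioi)).inter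
      (hg'meas measurableSet_Iic)
  set N : Set Ω := {ω | ℓ < f' ω} ∩ {ω | g' ω ≤ 0} with hNdef
  have hsub : {ω | ℓ < f' ω} ⊆ N ∪ ({ω | M < g' ω} ∪ A) := by
    intro ω hω
    rcases le_or_gt (g' ω) 0 with h0 | h0
    · exact Or.inl ⟨hω, h0⟩
    rcases le_or_gt (g' ω) M with hM | hM
    · exact Or.inr (Or.inr ⟨⟨hω, h0⟩, hM⟩)
    · exact Or.inr (Or.inl hM)
  -- the N-part is null
  have hNnull : P N = 0 := by
    have h0 := hpos f hf
    refine le_antisymm (le_trans (measure_mono_ae ?_) h0.le) bot_le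
    filter_upwards [hff', hgg', hgpos] with ω h1 h2 h3 hω
    have hf0 : (0 : ℝ) < f' ω := lt_trans hℓ0 hω.1
    have hg0 : g ω = 0 := le_antisymm (by rw [h2]; exact hω.2) h3
    exact ⟨show (0 : ℝ) < f ω by rw [h1]; exact hf0, hg0⟩
  -- Markov bound for the A-part
  have hQA : Q A < δ := by
    have hconst : ENNReal.ofReal (ℓ / M) * Q A ≤ 1 := by
      have h1 : ENNReal.ofReal (ℓ / M) * Q A = ∫⁻ _ in A, ENNReal.ofReal (ℓ / M) ∂Q := by
        rw [setLIntegral_const]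
      rw [h1]
      calc (∫⁻ _ in A, ENNReal.ofReal (ℓ / M) ∂Q)
          ≤ ∫⁻ ω in A, ENNReal.ofReal (f' ω / g' ω) ∂Q := by
            refine setLIntegral_mono (by fun_prop) fun ω hω => ?_
            refine ENNReal.ofReal_le_ofReal ?_
            exact div_le_div₀ (lt_trans hℓ0 hω.1.1).le hω.1.1.le hω.1.2 hω.2
        _ ≤ ∫⁻ ω in {ω | 0 < g' ω}, ENNReal.ofReal (f' ω / g' ω) ∂Q :=
            lintegral_mono_set fun ω hω => hω.1.2
        _ = ∫⁻ ω in {ω | 0 < g ω}, ENNReal.ofReal (f ω / g ω) ∂Q := by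
            rw [setLIntegral_congr (t := {ω | 0 < g ω})
              (hgg'Q.mono fun ω h => by change (0 < g' ω) = (0 < g ω); rw [h])]
            refine lintegral_congr_ae (ae_restrict_of_ae ?_)
            filter_upwards [hff'Q, hgg'Q] with ω h1 h2
            rw [h1, h2]
        _ ≤ Q {ω | 0 < g ω} := hbound f hf
        _ ≤ 1 := prob_le_one
    have hx0 : ENNReal.ofReal (ℓ / M) ≠ 0 := by
      simp only [ne_eq, ENNReal.ofReal_eq_zero, not_le]
      positivity
    have hQA' : Q A ≤ (ENNReal.ofReal (ℓ / M))⁻¹ :=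
      ENNReal.le_inv_iff_mul_le.mpr (by rwa [mul_comm] at hconst)
    calc Q A ≤ (ENNReal.ofReal (ℓ / M))⁻¹ := hQA'
    _ = ENNReal.ofReal (M / ℓ) := by
        rw [← ENNReal.ofReal_inv_of_pos (by positivity), inv_div]
    _ ≤ ENNReal.ofReal δ' := ENNReal.ofReal_le_ofReal hMδℓ
    _ = c := hδ'c
    _ < δ := hcδ
  -- combine
  calc P {ω | ℓ < f' ω} ≤ P (N ∪ ({ω | M < g' ω} ∪ A)) := measure_mono hsub
  _ ≤ P N + P ({ω | M < g' ω} ∪ A) := measure_union_le _ _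
  _ ≤ P N + (P {ω | M < g' ω} + P A) := add_le_add le_rfl (measure_union_le _ _)
  _ ≤ 0 + (ε' / 2 + ε' / 2) :=
      add_le_add hNnull.le (add_le_add hTM (hPQs A hQA))
  _ = ε' := by rw [zero_add, ENNReal.add_halves]

end
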